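/- For every α ∈ (0,2) and every s > 0, the function γ satisfies 0 ≤ γ(s) ≤ (2·√(2α)·(2−α)/(α·π))·s^α. -/

import Mathlib

open MeasureTheory Real Set
open scoped ENNReal NNReal

set_option maxHeartbeats 1000000

/-- The density `γ` from Kwaśnicki's formula for eigenfunctions on the half-line;
the integrand in the exponent has a removable singularity at `r = 1/s` (a single point,
hence negligible for the Lebesgue integral). -/
noncomputable def gammaFn (α : ℝ) (s : ℝ) : ℝ :=
  Real.sqrt (2 * α) * Real.sin (α * π / 2) / (2 * π) *
      (s ^ α / (1 + s ^ (2 * α) - 2 * s ^ α * Real.cos (α * π / 2))) *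
    Real.exp ((1 / π) * ∫ r in Set.Ioi (0 : ℝ),
      (1 + r ^ 2)⁻¹ * Real.log ((1 - r ^ α * s ^ α) / (1 - r ^ 2 * s ^ 2)))

/-- `G` is the Laplace transform of `γ`. -/
noncomputable def GFn (α : ℝ) (s : ℝ) : ℝ :=
  ∫ t in Set.Ioi (0 : ℝ), Real.exp (-s * t) * gammaFn α t

/-- The generalized eigenfunction profile on the half-line:
`F(s) = sin(s + (2−α)π/8) − G(s)` for `s > 0`, and `F(s) = 0` for `s ≤ 0`. -/
noncomputable def FFn (α : ℝ) (s : ℝ) : ℝ :=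
  if 0 < s then Real.sin (s + (2 - α) * π / 8) - GFn α s else 0

/-- The auxiliary cut-off function `q`. -/
noncomputable def qFn (x : ℝ) : ℝ :=
  if x ≤ -(1/3) then 0
  else if x ≤ 0 then 9/2 * (x + 1/3) ^ 2
  else if x ≤ 1/3 then 1 - 9/2 * (x - 1/3) ^ 2
  else 1

/-- `μ_n = nπ/2 − (2−α)π/8`. -/
noncomputable def muN (α : ℝ) (n : ℕ) : ℝ := n * π / 2 - (2 - α) * π / 8

/-- The approximate eigenfunction
`φ̃_n(x) = q(−x)·F(μ_n(1+x)) + (−1)^n·q(x)·F(μ_n(1−x))`. -/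
noncomputable def phiTilde (α : ℝ) (n : ℕ) (x : ℝ) : ℝ :=
  qFn (-x) * FFn α (muN α n * (1 + x)) + (-1 : ℝ) ^ n * qFn x * FFn α (muN α n * (1 - x))

/-- **Pointwise bound on `γ`:** for `α ∈ (0,2)` and `s > 0`,
`0 ≤ γ(s) ≤ (2√(2α)(2−α)/(απ)) s^α`. -/
theorem gammaFn_bounds (α : ℝ) (hα : α ∈ Set.Ioo (0 : ℝ) 2) (s : ℝ) (hs : 0 < s) :
    0 ≤ gammaFn α s ∧
    gammaFn α s ≤ 2 * Real.sqrt (2 * α) * (2 - α) / (α * π) * s ^ α := by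
  obtain ⟨hα0, hα2⟩ := hα
  have hπ := Real.pi_pos
  set S := Real.sin (α * π / 2) with hSdef
  set c := Real.cos (α * π / 2) with hcdef
  have hSpos : 0 < S := Real.sin_pos_of_pos_of_lt_pi (by positivity) (by nlinarith)
  have hsα : 0 < s ^ α := Real.rpow_pos_of_pos hs α
  have hpyth : S ^ 2 + c ^ 2 = 1 := Real.sin_sq_add_cos_sq _
  set D := 1 + s ^ (2 * α) - 2 * s ^ α * c with hDdef
  have hDeq : D = (s ^ α - c) ^ 2 + S ^ 2 := by
    have h2 : s ^ (2 * α) = (s ^ α) ^ 2 := by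
      rw [mul_comm, Real.rpow_mul hs.le, Real.rpow_two]
    rw [hDdef, h2]; nlinarith [hpyth]
  have hDpos : 0 < D := by rw [hDeq]; positivity
  -- the exponent integral is nonpositive
  have hE : (∫ r in Set.Ioi (0 : ℝ),
      (1 + r ^ 2)⁻¹ * Real.log ((1 - r ^ α * s ^ α) / (1 - r ^ 2 * s ^ 2))) ≤ 0 := by
    apply integral_nonpos_of_ae
    have h1 : ∀ᵐ r ∂(volume.restrict (Set.Ioi (0 : ℝ))), r ∈ Set.Ioi (0 : ℝ) :=
      ae_restrict_mem measurableSet_Ioi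
    have h2 : ∀ᵐ r ∂(volume.restrict (Set.Ioi (0 : ℝ))), r ≠ 1 / s := by
      refine ae_restrict_of_ae ?_
      refine (MeasureTheory.ae_iff).mpr ?_
      have : {r : ℝ | ¬ r ≠ 1 / s} = {1 / s} := by ext r; simp
      rw [this]; exact measure_singleton _
    filter_upwards [h1, h2] with r hr hne
    have hr0 : 0 < r := hr
    set u := r * s with hu
    have hu0 : 0 < u := mul_pos hr0 hs
    have hune : u ≠ 1 := by
      intro h
      apply hne
      field_simp [hu] at h ⊢
      linarith [h]
    have hrw1 : r ^ α * s ^ α = u ^ α := (Real.mul_rpow hr0.le hs.le).symm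
    have hrw2 : r ^ 2 * s ^ 2 = u ^ 2 := (mul_pow r s 2).symm
    have huα : u ^ ((2 : ℕ) : ℝ) = u ^ (2 : ℕ) := Real.rpow_natCast u 2
    have hratio : 0 ≤ (1 - u ^ α) / (1 - u ^ 2) ∧ (1 - u ^ α) / (1 - u ^ 2) ≤ 1 := by
      rcases lt_or_gt_of_ne hune with h | h
      · -- u < 1
        have ha : u ^ 2 < u ^ α := by
          have := Real.rpow_lt_rpow_of_exponent_gt hu0 h hα2
          rwa [show ((2:ℝ)) = ((2:ℕ):ℝ) by norm_num, huα] at this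
        have hb : u ^ α < 1 := Real.rpow_lt_one hu0.le h hα0
        have hc2 : u ^ 2 < 1 := by nlinarith
        constructor
        · exact div_nonneg (by linarith) (by linarith)
        · rw [div_le_one (by linarith)]; linarith
      · -- u > 1
        have ha : u ^ α < u ^ 2 := by
          have := Real.rpow_lt_rpow_of_exponent_lt h hα2
          rwa [show ((2:ℝ)) = ((2:ℕ):ℝ) by norm_num, huα] at this
        have hb : 1 < u ^ α := Real.one_lt_rpow_iff_of_pos hu0 |>.mpr (Or.inl ⟨h, hα0⟩)
        have hc2 : 1 < u ^ 2 := by nlinarith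
        have heq : (1 - u ^ α) / (1 - u ^ 2) = (u ^ α - 1) / (u ^ 2 - 1) := by
          rw [← neg_div_neg_eq]; ring_nf
        rw [heq]
        constructor
        · exact div_nonneg (by linarith) (by linarith)
        · rw [div_le_one (by linarith)]; linarith
      -- end cases
    have hlog : Real.log ((1 - r ^ α * s ^ α) / (1 - r ^ 2 * s ^ 2)) ≤ 0 := by
      rw [hrw1, hrw2]
      exact Real.log_nonpos hratio.1 hratio.2
    have hinv : (0:ℝ) ≤ (1 + r ^ 2)⁻¹ := by positivity
    calc (1 + r ^ 2)⁻¹ * Real.log ((1 - r ^ α * s ^ α) / (1 - r ^ 2 * s ^ 2))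
        ≤ (1 + r ^ 2)⁻¹ * 0 := mul_le_mul_of_nonneg_left hlog hinv
      _ = 0 := by ring
  have hexp : Real.exp ((1 / π) * ∫ r in Set.Ioi (0 : ℝ),
      (1 + r ^ 2)⁻¹ * Real.log ((1 - r ^ α * s ^ α) / (1 - r ^ 2 * s ^ 2))) ≤ 1 := by
    rw [Real.exp_le_one_iff]
    have h1π : (0:ℝ) ≤ 1 / π := by positivity
    exact mul_nonpos_of_nonneg_of_nonpos h1π hE
  -- key inequality : α * S ≤ 4 * (2 - α) * D
  have key : α * S ≤ 4 * (2 - α) * D := by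
    rcases le_or_gt α 1 with h1 | h1
    · -- α ≤ 1 : S ≥ α, D ≥ S^2
      have hSge : α ≤ S := by
        have := Real.mul_le_sin (x := α * π / 2) (by positivity) (by nlinarith)
        rw [← hSdef] at this
        have hπne : π ≠ 0 := ne_of_gt hπ
        calc α = 2 / π * (α * π / 2) := by field_simp
          _ ≤ S := this
      have hDS : S ^ 2 ≤ D := by rw [hDeq]; nlinarith [sq_nonneg (s ^ α - c)]
      nlinarith [hSpos, mul_le_mul_of_nonneg_right hSge hSpos.le]
    · -- α > 1 : c ≤ 0 so D ≥ 1 ; and S ≤ (2-α)π/2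
      have hcle : c ≤ 0 := by
        rw [hcdef]
        exact Real.cos_nonpos_of_pi_div_two_le_of_le (by nlinarith) (by nlinarith)
      have hD1 : 1 ≤ D := by
        rw [hDeq]
        nlinarith [sq_nonneg (s ^ α), mul_nonneg hsα.le (neg_nonneg.mpr hcle), hpyth]
      have hSle : S ≤ (2 - α) * π / 2 := by
        have : S = Real.sin ((2 - α) * π / 2) := by
          rw [hSdef, show (2 - α) * π / 2 = π - α * π / 2 by ring, Real.sin_pi_sub]
        rw [this]
        exact Real.sin_le (by nlinarith [hπ, hα2.le])
      have e1 : α * S ≤ 2 * S := by nlinarith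
      have e3 : (2 - α) * π ≤ 4 * (2 - α) := by nlinarith [Real.pi_le_four]
      have e4 := mul_le_mul_of_nonneg_left hD1 (show (0:ℝ) ≤ 4 * (2 - α) by linarith)
      rw [mul_one] at e4
      linarith
  -- assemble
  have hA : 0 ≤ Real.sqrt (2 * α) * S / (2 * π) := by positivity
  have hB : 0 ≤ s ^ α / D := le_of_lt (div_pos hsα hDpos)
  constructor
  · unfold gammaFn
    rw [← hSdef, ← hcdef, ← hDdef]
    exact mul_nonneg (mul_nonneg hA hB) (Real.exp_nonneg _)
  · have step1 : gammaFn α s ≤ Real.sqrt (2 * α) * S / (2 * π) * (s ^ α / D) := by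
      unfold gammaFn
      rw [← hSdef, ← hcdef, ← hDdef]
      exact mul_le_of_le_one_right (mul_nonneg hA hB) hexp
    refine step1.trans ?_
    have hfrac : S / (2 * π * D) ≤ 2 * (2 - α) / (α * π) := by
      rw [div_le_div_iff₀ (by positivity) (by positivity)]
      nlinarith [key, hπ]
    have hrw : Real.sqrt (2 * α) * S / (2 * π) * (s ^ α / D)
        = Real.sqrt (2 * α) * s ^ α * (S / (2 * π * D)) := by
      field_simp
    have hrw2 : 2 * Real.sqrt (2 * α) * (2 - α) / (α * π) * s ^ α
        = Real.sqrt (2 * α) * s ^ α * (2 * (2 - α) / (α * π)) := by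
      field_simp
    rw [hrw, hrw2]
    exact mul_le_mul_of_nonneg_left hfrac (by positivity)
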